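/- For a, b, c ∈ ℂ with c not a nonpositive integer, and for complex x with |x| < 1/2, the Pfaff transformation holds: ₂F₁(a, b; c; x) = (1−x)^{−a} · ₂F₁(a, c−b; c; x/(x−1)). -/

import Mathlib

/-- The Pochhammer symbol `(a)_n = a(a+1)⋯(a+n-1)`. -/
noncomputable def poch (a : ℂ) (n : ℕ) : ℂ := Polynomial.eval a (ascPochhammer ℂ n)

/-- `z` is not a nonpositive integer. -/
def NotNonposInt (z : ℂ) : Prop := ∀ m : ℕ, z ≠ -(m : ℂ)

/-- The Gauss hypergeometric series `₂F₁(a,b;c;x)`. -/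
noncomputable def twoF1 (a b c x : ℂ) : ℂ :=
  ∑' k : ℕ, poch a k * poch b k / (poch c k * (Nat.factorial k)) * x ^ k

open Filter Finset



lemma poch_zero (a : ℂ) : poch a 0 = 1 := by simp [poch]

lemma poch_succ (a : ℂ) (n : ℕ) : poch a (n + 1) = poch a n * (a + n) := by
  simp [poch, ascPochhammer_succ_right]

lemma poch_succ_left (a : ℂ) (n : ℕ) : poch a (n + 1) = a * poch (a + 1) n := by
  simp [poch, ascPochhammer_succ_left, Polynomial.eval_comp]

lemma poch_add (a : ℂ) (k n : ℕ) : poch a (k + n) = poch a k * poch (a + k) n := by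
  have := congrArg (Polynomial.eval a) (ascPochhammer_mul ℂ k n)
  simpa [poch, Polynomial.eval_comp] using this.symm

/-- real Pochhammer -/
noncomputable def rpoch (t : ℝ) (n : ℕ) : ℝ := Polynomial.eval t (ascPochhammer ℝ n)

lemma rpoch_zero (t : ℝ) : rpoch t 0 = 1 := by simp [rpoch]

lemma rpoch_succ (t : ℝ) (n : ℕ) : rpoch t (n + 1) = rpoch t n * (t + n) := by
  simp [rpoch, ascPochhammer_succ_right]

lemma rpoch_pos {t : ℝ} (ht : 0 < t) (n : ℕ) : 0 < rpoch t n := by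
  induction n with
  | zero => simp [rpoch_zero]
  | succ n ih => rw [rpoch_succ]; positivity

lemma norm_poch_le (s : ℂ) (n : ℕ) : ‖poch s n‖ ≤ rpoch (‖s‖ + 1) n := by
  induction n with
  | zero => simp [poch_zero, rpoch_zero]
  | succ n ih =>
    rw [poch_succ, rpoch_succ]
    have h1 : ‖s + (n : ℂ)‖ ≤ ‖s‖ + 1 + n := by
      calc ‖s + (n : ℂ)‖ ≤ ‖s‖ + ‖(n : ℂ)‖ := norm_add_le _ _
      _ ≤ ‖s‖ + 1 + n := by
        have : ‖(n : ℂ)‖ = (n : ℝ) := by simp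
        rw [this]; linarith
    calc ‖poch s n * (s + n)‖ = ‖poch s n‖ * ‖s + (n:ℂ)‖ := norm_mul _ _
    _ ≤ rpoch (‖s‖ + 1) n * (‖s‖ + 1 + n) := by
        apply mul_le_mul ih h1 (norm_nonneg _) (le_of_lt (rpoch_pos (by positivity) n))

lemma poch_ne_zero {c : ℂ} (hc : ∀ m : ℕ, c ≠ -(m : ℂ)) (n : ℕ) : poch c n ≠ 0 := by
  induction n with
  | zero => simp [poch_zero]
  | succ n ih =>
    rw [poch_succ]
    refine mul_ne_zero ih ?_
    intro h
    exact hc n (by linear_combination h)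

/-- ratio-test summability helper: if `f (n+1) = f n * g n` and `‖g n‖ → l < 1`
then `f` is summable. -/
lemma summable_of_mul_step {𝕜 : Type*} [NormedField 𝕜] [CompleteSpace 𝕜] {f g : ℕ → 𝕜}
    (hfg : ∀ n, f (n + 1) = f n * g n) {l : ℝ}
    (hg : Tendsto (fun n => ‖g n‖) atTop (nhds l)) (hl : l < 1) : Summable f := by
  obtain ⟨r, hlr, hr1⟩ := exists_between hl
  refine summable_of_ratio_norm_eventually_le hr1 ?_
  filter_upwards [hg.eventually_le_const hlr] with n hn
  rw [hfg n, norm_mul]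
  exact mul_le_mul_of_nonneg_left hn (norm_nonneg _) |>.trans_eq (mul_comm _ _)

lemma tendsto_shift_ratio (p q : ℂ) :
    Tendsto (fun n : ℕ => (p + n) / (q + n)) atTop (nhds 1) := by
  have h0 : Tendsto (fun n : ℕ => (p + (n:ℂ)) / (q + n) - 1) atTop (nhds 0) := by
    rw [tendsto_zero_iff_norm_tendsto_zero]
    apply squeeze_zero' (g := fun n : ℕ => ‖p - q‖ / ((n : ℝ) - ‖q‖))
      (Eventually.of_forall fun n => norm_nonneg _)
    · filter_upwards [eventually_gt_atTop (⌈‖q‖⌉₊ + 1)] with n hn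
      have hq : ‖q‖ < (n : ℝ) := by
        calc ‖q‖ ≤ ⌈‖q‖⌉₊ := Nat.le_ceil _
        _ < n := by exact_mod_cast Nat.lt_of_succ_lt hn
      have hqn : (q + (n : ℂ)) ≠ 0 := by
        intro h
        have h1 : ‖(n:ℂ)‖ = ‖q‖ := by
          have : (n : ℂ) = -q := by linear_combination h
          rw [this, norm_neg]
        rw [Complex.norm_natCast] at h1
        linarith
      have : (p + (n:ℂ)) / (q + n) - 1 = (p - q) / (q + n) := by
        field_simp
        ring
      rw [this, norm_div]
      apply div_le_div_of_nonneg_left (norm_nonneg _) (by linarith) ?_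
      · have h2 : ‖(n:ℂ)‖ ≤ ‖q + n‖ + ‖q‖ := by
          calc ‖(n:ℂ)‖ = ‖(q + n) - q‖ := by ring_nf
          _ ≤ ‖q + n‖ + ‖q‖ := norm_sub_le _ _
        rw [Complex.norm_natCast] at h2
        linarith
    · apply Tendsto.div_atTop tendsto_const_nhds
      apply tendsto_atTop_add_const_right
      exact tendsto_natCast_atTop_atTop
  have := h0.add_const 1
  simpa using this




lemma summable_binom (s x : ℂ) (hx : ‖x‖ < 1) :
    Summable (fun n => poch s n / (n.factorial : ℂ) * x ^ n) := by
  apply summable_of_mul_step (g := fun n : ℕ => (s + n) / (1 + n) * x) (l := ‖x‖) ?_ ?_ hx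
  · intro n
    have hf : ((n.factorial : ℂ)) ≠ 0 := Nat.cast_ne_zero.mpr n.factorial_ne_zero
    have hn1 : ((n : ℂ) + 1) ≠ 0 := Nat.cast_add_one_ne_zero n
    have hfac : (((n + 1).factorial : ℕ) : ℂ) = ((n : ℂ) + 1) * (n.factorial : ℂ) := by
      rw [Nat.factorial_succ]; push_cast; ring
    have hn1' : (1 : ℂ) + n ≠ 0 := by rw [add_comm]; exact hn1
    rw [poch_succ, hfac, pow_succ]
    field_simp
    ring
  · have := (tendsto_shift_ratio s 1).norm.mul_const ‖x‖
    simp only [norm_one] at this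
    simpa [norm_mul] using this

/-- the `n`-th term of the derivative of the binomial series -/
noncomputable def dcoef (s : ℂ) : ℕ → ℂ → ℂ
  | 0 => fun _ => 0
  | (n + 1) => fun y => poch s (n + 1) / (n.factorial : ℂ) * y ^ n

/-- bound for `dcoef` on the ball of radius `r` -/
noncomputable def dbound (s : ℂ) (r : ℝ) : ℕ → ℝ
  | 0 => 0
  | (n + 1) => ‖poch s (n + 1) / (n.factorial : ℂ)‖ * r ^ n

lemma summable_dbound (s : ℂ) {r : ℝ} (hr0 : 0 ≤ r) (hr1 : r < 1) :
    Summable (dbound s r) := by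
  rw [← summable_nat_add_iff 1]
  have key : ∀ n : ℕ, poch s (n + 1 + 1) / ((n + 1).factorial : ℂ)
      = poch s (n + 1) / (n.factorial : ℂ) * ((s + (n + 1)) / ((n : ℂ) + 1)) := by
    intro n
    have hf : ((n.factorial : ℂ)) ≠ 0 := Nat.cast_ne_zero.mpr n.factorial_ne_zero
    have hn1 : ((n : ℂ) + 1) ≠ 0 := Nat.cast_add_one_ne_zero n
    have hfac : (((n + 1).factorial : ℕ) : ℂ) = ((n : ℂ) + 1) * (n.factorial : ℂ) := by
      rw [Nat.factorial_succ]; push_cast; ring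
    rw [show n + 1 + 1 = (n + 1) + 1 from rfl, poch_succ, hfac, div_mul_div_comm]
    congr 1 <;> push_cast <;> ring
  apply summable_of_mul_step (g := fun n : ℕ => ‖(s + ((n : ℂ) + 1)) / ((n : ℂ) + 1)‖ * r)
    (l := r) ?_ ?_ hr1
  · intro n
    show dbound s r (n + 1 + 1) = dbound s r (n + 1) * _
    rw [show dbound s r (n + 1 + 1) = ‖poch s (n + 1 + 1) / (((n + 1).factorial : ℕ) : ℂ)‖ * r ^ (n + 1) from rfl,
      show dbound s r (n + 1) = ‖poch s (n + 1) / ((n.factorial : ℕ) : ℂ)‖ * r ^ n from rfl,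
      key n, norm_mul, pow_succ]
    ring
  · have h2 : Tendsto (fun n : ℕ => ((s + 1) + (n : ℂ)) / (1 + (n : ℂ))) atTop (nhds 1) :=
      tendsto_shift_ratio (s + 1) 1
    have heq : (fun n : ℕ => (s + ((n : ℂ) + 1)) / ((n : ℂ) + 1))
        = fun n : ℕ => ((s + 1) + (n : ℂ)) / (1 + (n : ℂ)) := by
      funext n; congr 1 <;> ring
    have h3 := h2.norm.mul_const r
    simp only [norm_one, one_mul] at h3
    refine Tendsto.congr (fun n => ?_) h3
    rw [Real.norm_of_nonneg (by positivity)]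
    exact congrArg (fun z => ‖z‖ * r) (congrFun heq n).symm

lemma hasDerivAt_binomAux (s : ℂ) {x : ℂ} (hx : ‖x‖ < 1) :
    ∃ D : ℂ, HasSum (fun n => poch s (n + 1) / (n.factorial : ℂ) * x ^ n) D ∧
      HasDerivAt (fun y => ∑' n, poch s n / (n.factorial : ℂ) * y ^ n) D x := by
  set r : ℝ := (1 + ‖x‖) / 2 with hrdef
  have hxr : ‖x‖ < r := by rw [hrdef]; linarith
  have hr1 : r < 1 := by rw [hrdef]; linarith
  have hr0 : (0 : ℝ) < r := lt_of_le_of_lt (norm_nonneg x) hxr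
  have hball : ∀ y ∈ Metric.ball (0 : ℂ) r, ‖y‖ < r := by
    intro y hy; simpa [Metric.mem_ball, dist_zero_right] using hy
  have hg : ∀ (n : ℕ), ∀ y ∈ Metric.ball (0 : ℂ) r,
      HasDerivAt (fun z => poch s n / (n.factorial : ℂ) * z ^ n) (dcoef s n y) y := by
    intro n y _
    match n with
    | 0 =>
      show HasDerivAt _ (0 : ℂ) y
      have : (fun z : ℂ => poch s 0 / ((Nat.factorial 0 : ℕ) : ℂ) * z ^ 0)
          = fun _ => poch s 0 / ((Nat.factorial 0 : ℕ) : ℂ) := by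
        funext z; simp
      rw [this]
      exact hasDerivAt_const _ _
    | (n + 1) =>
      have h1 := (hasDerivAt_pow (n + 1) y).const_mul (poch s (n + 1) / (((n + 1).factorial : ℕ) : ℂ))
      convert h1 using 1
      show poch s (n + 1) / ((n.factorial : ℕ) : ℂ) * y ^ n = _
      have hf : ((n.factorial : ℂ)) ≠ 0 := Nat.cast_ne_zero.mpr n.factorial_ne_zero
      have hf1 : (((n + 1).factorial : ℕ) : ℂ) ≠ 0 := Nat.cast_ne_zero.mpr (n + 1).factorial_ne_zero
      rw [Nat.factorial_succ] at hf1 ⊢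
      push_cast at hf1 ⊢
      field_simp
      rfl
      rfl
  have hg' : ∀ (n : ℕ), ∀ y ∈ Metric.ball (0 : ℂ) r, ‖dcoef s n y‖ ≤ dbound s r n := by
    intro n y hy
    match n with
    | 0 => simp [dcoef, dbound]
    | (n + 1) =>
      show ‖poch s (n + 1) / (n.factorial : ℂ) * y ^ n‖ ≤ ‖poch s (n + 1) / (n.factorial : ℂ)‖ * r ^ n
      rw [norm_mul, norm_pow]
      exact mul_le_mul_of_nonneg_left (pow_le_pow_left₀ (norm_nonneg y) (hball y hy).le n)
        (norm_nonneg _)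
  have hu := summable_dbound s hr0.le hr1
  have hderiv := hasDerivAt_tsum_of_isPreconnected hu Metric.isOpen_ball
    (convex_ball (0 : ℂ) r).isPreconnected hg hg'
    (Metric.mem_ball_self hr0)
    (summable_binom s 0 (by simp))
    (by simpa [Metric.mem_ball, dist_zero_right] using hxr)
  have hsumd : Summable (fun n => dcoef s n x) :=
    Summable.of_norm_bounded hu
      (fun n => hg' n x (by simpa [Metric.mem_ball, dist_zero_right] using hxr))
  refine ⟨∑' n, dcoef s n x, ?_, hderiv⟩
  have h0 : dcoef s 0 x = 0 := rfl
  have := (hasSum_nat_add_iff (f := fun n => dcoef s n x) 1).mpr (by simpa [h0] using hsumd.hasSum)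
  exact this

lemma deriv_rel (s : ℂ) {x : ℂ} (hx : ‖x‖ < 1) {D : ℂ}
    (hD : HasSum (fun n => poch s (n + 1) / (n.factorial : ℂ) * x ^ n) D) :
    (1 - x) * D = s * ∑' n, poch s n / (n.factorial : ℂ) * x ^ n := by
  have hf := (summable_binom s x hx).hasSum
  set F := ∑' n, poch s n / (n.factorial : ℂ) * x ^ n with hF
  have hsF : HasSum (fun n => s * (poch s n / (n.factorial : ℂ) * x ^ n)) (s * F) :=
    hf.mul_left s
  set q : ℕ → ℂ := fun n => poch s (n + 1) / (n.factorial : ℂ) * x ^ n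
    - s * (poch s n / (n.factorial : ℂ) * x ^ n) with hq
  have hsub : HasSum q (D - s * F) := hD.sub hsF
  have h0 : q 0 = 0 := by
    simp [hq, poch_zero, show poch s 1 = s by rw [show (1:ℕ) = 0 + 1 from rfl, poch_succ]; simp [poch_zero]]
  have hshift : HasSum (fun n => q (n + 1)) (D - s * F) :=
    (hasSum_nat_add_iff 1).mpr (by simpa [h0] using hsub)
  have key : ∀ n : ℕ, q (n + 1) = x * (poch s (n + 1) / (n.factorial : ℂ) * x ^ n) := by
    intro n
    have hfn : ((n.factorial : ℂ)) ≠ 0 := Nat.cast_ne_zero.mpr n.factorial_ne_zero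
    have hn1 : ((n : ℂ) + 1) ≠ 0 := Nat.cast_add_one_ne_zero n
    have hfac : (((n + 1).factorial : ℕ) : ℂ) = ((n : ℂ) + 1) * (n.factorial : ℂ) := by
      rw [Nat.factorial_succ]; push_cast; ring
    rw [hq]
    show poch s (n + 1 + 1) / (((n+1).factorial : ℕ) : ℂ) * x ^ (n+1)
      - s * (poch s (n + 1) / (((n+1).factorial : ℕ) : ℂ) * x ^ (n+1)) = _
    rw [show n + 1 + 1 = (n + 1) + 1 from rfl, poch_succ, hfac, pow_succ]
    field_simp
    push_cast
    ring
  have hxD : HasSum (fun n => x * (poch s (n + 1) / (n.factorial : ℂ) * x ^ n)) (x * D) :=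
    hD.mul_left x
  have huniq : D - s * F = x * D := by
    refine HasSum.unique ?_ hxD
    exact (funext key : (fun n => q (n + 1)) = _) ▸ hshift
  linear_combination huniq

theorem hasSum_binom (s : ℂ) {x : ℂ} (hx : ‖x‖ < 1) :
    HasSum (fun n => poch s n / (n.factorial : ℂ) * x ^ n) ((1 - x) ^ (-s)) := by
  set f : ℂ → ℂ := fun y => ∑' n, poch s n / (n.factorial : ℂ) * y ^ n with hfdef
  have key : ∀ y ∈ Metric.ball (0 : ℂ) 1, HasDerivAt (fun z => (1 - z) ^ s * f z) 0 y := by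
    intro y hy
    have hy1 : ‖y‖ < 1 := by simpa [Metric.mem_ball, dist_zero_right] using hy
    obtain ⟨D, hDsum, hDderiv⟩ := hasDerivAt_binomAux s hy1
    have hrel := deriv_rel s hy1 hDsum
    have hyre : (0:ℝ) < (1 - y).re := by
      have := Complex.abs_re_le_norm y
      simp only [Complex.sub_re, Complex.one_re]
      have : |y.re| < 1 := lt_of_le_of_lt this hy1
      rw [abs_lt] at this
      linarith
    have h1y : (1 - y) ≠ 0 := by
      intro h
      rw [h] at hyre; simp at hyre
    have h1 : HasDerivAt (fun z : ℂ => (1 - z) ^ s) (s * (1 - y) ^ (s - 1) * (-1)) y := by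
      refine HasDerivAt.cpow_const ?_ ?_
      · simpa using ((hasDerivAt_id y).const_sub 1)
      · exact Complex.mem_slitPlane_iff.mpr (Or.inl hyre)
    have hmul := h1.mul hDderiv
    have hval : s * (1 - y) ^ (s - 1) * (-1) * f y + (1 - y) ^ s * D = 0 := by
      have hpow : (1 - y) ^ s = (1 - y) ^ (s - 1) * (1 - y) := by
        rw [Complex.cpow_sub _ _ h1y, Complex.cpow_one]
        field_simp
      rw [hpow]
      have : f y = ∑' n, poch s n / (n.factorial : ℂ) * y ^ n := rfl
      rw [this]
      linear_combination (1 - y) ^ (s - 1) * hrel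
    rw [hval] at hmul
    exact hmul
  have hconst : ∀ y ∈ Metric.ball (0 : ℂ) 1, (1 - y) ^ s * f y = (1 - (0:ℂ)) ^ s * f 0 := by
    intro y hy
    refine (convex_ball (0:ℂ) 1).is_const_of_fderivWithin_eq_zero (𝕜 := ℂ)
      (f := fun z => (1 - z) ^ s * f z) ?_ ?_ hy (Metric.mem_ball_self one_pos)
    · intro z hz
      exact ((key z hz).differentiableAt).differentiableWithinAt
    · intro z hz
      rw [fderivWithin_of_isOpen Metric.isOpen_ball hz]
      have := ((key z hz).hasFDerivAt).fderiv
      rw [this]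
      ext w
      simp
  have hf0 : f 0 = 1 := by
    show (∑' n, poch s n / (n.factorial : ℂ) * (0:ℂ) ^ n) = 1
    rw [tsum_eq_single 0 (by intro n hn; simp [zero_pow hn])]
    simp [poch_zero]
  have hx1 : ‖x‖ < 1 := hx
  have hxball : x ∈ Metric.ball (0:ℂ) 1 := by simpa [Metric.mem_ball, dist_zero_right] using hx1
  have hc := hconst x hxball
  rw [hf0, mul_one] at hc
  simp only [sub_zero, Complex.one_cpow] at hc
  have h1x : (1 - x) ≠ 0 := by
    intro h
    have : (1:ℝ) ≤ ‖x‖ := by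
      have : x = 1 := by linear_combination -h
      simp [this]
    linarith
  have hfx : f x = (1 - x) ^ (-s) := by
    have h2 := congrArg (fun z => (1 - x) ^ (-s) * z) hc
    simp only [mul_one] at h2
    rw [← mul_assoc, ← Complex.cpow_add _ _ h1x] at h2
    simpa using h2
  have := (summable_binom s x hx).hasSum
  rwa [show ∑' n, poch s n / (n.factorial : ℂ) * x ^ n = f x from rfl, hfx] at this




lemma vdm (d : ℂ) : ∀ (m : ℕ) (c : ℂ),
    ∑ k ∈ range (m + 1), (-1 : ℂ) ^ k * (m.choose k : ℂ) * poch d k * poch (c + k) (m - k)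
      = poch (c - d) m := by
  intro m
  induction m with
  | zero => intro c; simp [poch_zero]
  | succ m ih =>
    intro c
    have step1 : ∑ k ∈ range (m + 1 + 1),
        (-1 : ℂ) ^ k * ((m + 1).choose k : ℂ) * poch d k * poch (c + k) (m + 1 - k)
        = (∑ k ∈ range (m + 1),
            ((-1 : ℂ) ^ (k + 1) * (m.choose (k + 1) : ℂ) * poch d (k + 1)
                * poch (c + 1 + k) (m - k)
              + -((-1 : ℂ) ^ k * (m.choose k : ℂ) * poch d k * (d + k)
                * poch (c + 1 + k) (m - k))))
          + poch c (m + 1) := by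
      rw [Finset.sum_range_succ']
      congr 1
      · apply Finset.sum_congr rfl
        intro k _
        rw [Nat.succ_sub_succ, Nat.choose_succ_succ, poch_succ d k]
        rw [show (c + ((k + 1 : ℕ) : ℂ)) = c + 1 + (k : ℂ) by push_cast; ring]
        push_cast
        ring
      · simp [poch_zero]
    have claim1 : (∑ k ∈ range (m + 1),
          (-1 : ℂ) ^ (k + 1) * (m.choose (k + 1) : ℂ) * poch d (k + 1)
            * poch (c + 1 + k) (m - k)) + poch c (m + 1)
        = ∑ k ∈ range (m + 1),
            (-1 : ℂ) ^ k * (m.choose k : ℂ) * poch d k * ((c + k) * poch (c + 1 + k) (m - k)) := by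
      rw [Finset.sum_range_succ' (fun k =>
        (-1 : ℂ) ^ k * (m.choose k : ℂ) * poch d k * ((c + k) * poch (c + 1 + k) (m - k))) m]
      have hA : ∑ k ∈ range (m + 1),
          (-1 : ℂ) ^ (k + 1) * (m.choose (k + 1) : ℂ) * poch d (k + 1)
            * poch (c + 1 + k) (m - k)
          = ∑ k ∈ range m,
          (-1 : ℂ) ^ (k + 1) * (m.choose (k + 1) : ℂ) * poch d (k + 1)
            * poch (c + 1 + k) (m - k) := by
        rw [Finset.sum_range_succ]
        simp [Nat.choose_succ_self]
      rw [hA]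
      have hs10 : (-1 : ℂ) ^ 0 * (m.choose 0 : ℂ) * poch d 0
          * ((c + ((0:ℕ):ℂ)) * poch (c + 1 + ((0:ℕ):ℂ)) (m - 0)) = poch c (m + 1) := by
        simp only [pow_zero, Nat.choose_zero_right, Nat.cast_one, Nat.cast_zero, add_zero,
          Nat.sub_zero, one_mul, poch_zero]
        rw [← poch_succ_left c m]
      rw [hs10]
      congr 1
      apply Finset.sum_congr rfl
      intro k hk
      have hkm : k < m := Finset.mem_range.mp hk
      have e1 : (c + ((k + 1 : ℕ) : ℂ)) = c + 1 + (k : ℂ) := by push_cast; ring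
      have e2 : (c + 1 + ((k + 1 : ℕ) : ℂ)) = (c + 1 + (k : ℂ)) + 1 := by push_cast; ring
      rw [e1, e2, show m - k = (m - (k + 1)) + 1 by omega,
        poch_succ_left (c + 1 + (k : ℂ)) (m - (k + 1))]
    calc ∑ k ∈ range (m + 1 + 1),
        (-1 : ℂ) ^ k * ((m + 1).choose k : ℂ) * poch d k * poch (c + k) (m + 1 - k)
        = (∑ k ∈ range (m + 1),
            ((-1 : ℂ) ^ (k + 1) * (m.choose (k + 1) : ℂ) * poch d (k + 1)
                * poch (c + 1 + k) (m - k)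
              + -((-1 : ℂ) ^ k * (m.choose k : ℂ) * poch d k * (d + k)
                * poch (c + 1 + k) (m - k))))
          + poch c (m + 1) := step1
      _ = ((∑ k ∈ range (m + 1),
            (-1 : ℂ) ^ (k + 1) * (m.choose (k + 1) : ℂ) * poch d (k + 1)
                * poch (c + 1 + k) (m - k)) + poch c (m + 1))
          + ∑ k ∈ range (m + 1),
            -((-1 : ℂ) ^ k * (m.choose k : ℂ) * poch d k * (d + k)
                * poch (c + 1 + k) (m - k)) := by
          rw [Finset.sum_add_distrib]; ring
      _ = (∑ k ∈ range (m + 1),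
            (-1 : ℂ) ^ k * (m.choose k : ℂ) * poch d k * ((c + k) * poch (c + 1 + k) (m - k)))
          + ∑ k ∈ range (m + 1),
            -((-1 : ℂ) ^ k * (m.choose k : ℂ) * poch d k * (d + k)
                * poch (c + 1 + k) (m - k)) := by rw [claim1]
      _ = ∑ k ∈ range (m + 1),
            (c - d) * ((-1 : ℂ) ^ k * (m.choose k : ℂ) * poch d k * poch (c + 1 + k) (m - k)) := by
          rw [← Finset.sum_add_distrib]
          apply Finset.sum_congr rfl
          intro k _
          ring
      _ = (c - d) * ∑ k ∈ range (m + 1),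
            (-1 : ℂ) ^ k * (m.choose k : ℂ) * poch d k * poch (c + 1 + k) (m - k) := by
          rw [Finset.mul_sum]
      _ = (c - d) * poch (c + 1 - d) m := by rw [ih (c + 1)]
      _ = poch (c - d) (m + 1) := by
          rw [poch_succ_left (c - d) m, show (c : ℂ) + 1 - d = c - d + 1 by ring]


lemma rpoch_mono {α β : ℝ} (h0 : 0 < α) (h : α ≤ β) (n : ℕ) : rpoch α n ≤ rpoch β n := by
  induction n with
  | zero => simp [rpoch_zero]
  | succ n ih =>
    rw [rpoch_succ, rpoch_succ]
    have hb : 0 < β := lt_of_lt_of_le h0 h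
    exact mul_le_mul ih (by linarith) (by positivity) (rpoch_pos hb n).le

lemma poch_ofReal (r : ℝ) (n : ℕ) : poch ((r : ℂ)) n = ((rpoch r n : ℝ) : ℂ) := by
  induction n with
  | zero => simp [poch_zero, rpoch_zero]
  | succ n ih => rw [poch_succ, rpoch_succ, ih]; push_cast; ring

lemma rbinom (α : ℝ) {r : ℝ} (h0 : 0 ≤ r) (h1 : r < 1) :
    HasSum (fun n => rpoch α n / n.factorial * r ^ n) ((1 - r) ^ (-α)) := by
  have hr : ‖(r : ℂ)‖ < 1 := by
    rw [Complex.norm_real, Real.norm_of_nonneg h0]; exact h1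
  have h := hasSum_binom ((α : ℂ)) hr
  have heq : (fun n : ℕ => poch ((α : ℂ)) n / (n.factorial : ℂ) * (r : ℂ) ^ n)
      = fun n : ℕ => ((rpoch α n / n.factorial * r ^ n : ℝ) : ℂ) := by
    funext n; rw [poch_ofReal]; push_cast; ring
  rw [heq] at h
  have hval : (((1 - r) ^ (-α) : ℝ) : ℂ) = (1 - (r : ℂ)) ^ (-(α : ℂ)) := by
    rw [Complex.ofReal_cpow (by linarith : (0:ℝ) ≤ 1 - r)]
    push_cast
    ring_nf
  rw [← hval] at h
  exact Complex.hasSum_ofReal.mp h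

lemma tsum_prod_antidiag {f : ℕ × ℕ → ℂ} (hf : Summable f) :
    ∑' p : ℕ × ℕ, f p = ∑' m, ∑ kl ∈ Finset.HasAntidiagonal.antidiagonal m, f kl := by
  conv_rhs => congr; ext; rw [← Finset.sum_finset_coe, ← tsum_fintype (L := .unconditional _)]
  rw [← Finset.HasAntidiagonal.sigmaAntidiagonalEquivProd.tsum_eq f]
  exact Summable.tsum_sigma' (fun n => (hasSum_fintype _).summable)
    (Finset.HasAntidiagonal.sigmaAntidiagonalEquivProd.summable_iff.mpr hf)

lemma summable_T_mul (a b c : ℂ) (hc : ∀ m : ℕ, c ≠ -(m : ℂ)) {v : ℂ} (hv : ‖v‖ < 1) :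
    Summable (fun k : ℕ => poch a k * poch (c - b) k / (poch c k * (k.factorial : ℂ)) * v ^ k) := by
  apply summable_of_mul_step
    (g := fun k : ℕ => (a + k) / (1 + k) * ((c - b + k) / (c + k)) * v) (l := ‖v‖) ?_ ?_ hv
  · intro k
    have h1 : poch c k ≠ 0 := poch_ne_zero hc k
    have h2 : (c + k) ≠ 0 := by intro h; exact hc k (by linear_combination h)
    have h3 : ((k.factorial : ℂ)) ≠ 0 := Nat.cast_ne_zero.mpr k.factorial_ne_zero
    have h4 : ((k : ℂ) + 1) ≠ 0 := Nat.cast_add_one_ne_zero k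
    have h4' : (1 : ℂ) + k ≠ 0 := by rw [add_comm]; exact h4
    have hfac : (((k + 1).factorial : ℕ) : ℂ) = ((k : ℂ) + 1) * (k.factorial : ℂ) := by
      rw [Nat.factorial_succ]; push_cast; ring
    rw [poch_succ a k, poch_succ (c - b) k, poch_succ c k, hfac, pow_succ]
    field_simp
    ring
  · have h := (((tendsto_shift_ratio a 1).mul (tendsto_shift_ratio (c - b) c)).mul_const v).norm
    simpa using h

set_option maxHeartbeats 1000000 in
theorem pfaff_transform (a b c : ℂ) (hc : NotNonposInt c) (x : ℂ) (hx : ‖x‖ < 1 / 2) :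
    twoF1 a b c x = (1 - x) ^ (-a) * twoF1 a (c - b) c (x / (x - 1)) := by
  have hc' : ∀ m : ℕ, c ≠ -(m : ℂ) := hc
  have hx1 : ‖x‖ < 1 := lt_trans hx (by norm_num)
  have h1x : (1 : ℂ) - x ≠ 0 := by
    intro h
    have hx1' : x = 1 := by linear_combination -h
    rw [hx1'] at hx1; simp at hx1
  set t : ℝ := ‖x‖ with ht
  have ht0 : 0 ≤ t := norm_nonneg x
  have h1t : (0 : ℝ) < 1 - t := by
    have : t < 1/2 := hx
    linarith
  set u : ℂ := x / (x - 1) with hu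
  set α : ℝ := ‖a‖ + 1 with hα
  set w : ℝ := t / (1 - t) with hw
  have hw0 : 0 ≤ w := div_nonneg ht0 h1t.le
  have hw1 : w < 1 := by
    rw [hw, div_lt_one h1t]
    have : t < 1/2 := hx
    linarith
  set T : ℕ → ℂ := fun k => poch a k * poch (c - b) k / (poch c k * (k.factorial : ℂ)) with hT
  set F : ℕ × ℕ → ℂ := fun p => T p.1 * (-1) ^ p.1 * x ^ p.1
    * (poch (a + p.1) p.2 / (p.2.factorial : ℂ) * x ^ p.2) with hFdef
  -- rows
  have hrow : ∀ k : ℕ, Summable (fun n => F (k, n)) := by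
    intro k
    have h := ((hasSum_binom (a + (k : ℂ)) hx1).summable).mul_left (T k * (-1) ^ k * x ^ k)
    simp only [hFdef]
    exact h
  have hrownorm : ∀ k : ℕ, Summable (fun n => ‖F (k, n)‖) := by
    intro k
    exact summable_norm_iff.mpr (hrow k)
  have hbinnorm : ∀ k : ℕ,
      Summable (fun n => ‖poch (a + (k : ℂ)) n / (n.factorial : ℂ) * x ^ n‖) := by
    intro k
    exact summable_norm_iff.mpr (hasSum_binom (a + (k : ℂ)) hx1).summable
  have hbound : ∀ k n : ℕ, ‖poch (a + (k : ℂ)) n / (n.factorial : ℂ) * x ^ n‖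
      ≤ rpoch (α + k) n / n.factorial * t ^ n := by
    intro k n
    rw [norm_mul, norm_div, norm_pow, Complex.norm_natCast]
    have h5 := norm_poch_le (a + (k : ℂ)) n
    have h6 : ‖a + (k : ℂ)‖ + 1 ≤ α + k := by
      have h7 := norm_add_le a ((k : ℂ))
      rw [Complex.norm_natCast] at h7
      rw [hα]; linarith
    have h8 : ‖poch (a + (k : ℂ)) n‖ ≤ rpoch (α + k) n :=
      le_trans h5 (rpoch_mono (by positivity) h6 n)
    have hfn : (0 : ℝ) < n.factorial := by exact_mod_cast n.factorial_pos
    gcongr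
  have hrowsum_le : ∀ k : ℕ, ∑' n, ‖F (k, n)‖
      ≤ ((1 - t) ^ (-α) : ℝ) * ‖T k * ((w : ℝ) : ℂ) ^ k‖ := by
    intro k
    have e1 : (fun n : ℕ => ‖F (k, n)‖) = fun n =>
        ‖T k * (-1) ^ k * x ^ k‖ * ‖poch (a + (k : ℂ)) n / (n.factorial : ℂ) * x ^ n‖ :=
      funext fun n => norm_mul _ _
    rw [e1, tsum_mul_left]
    have e2 : ∑' n, ‖poch (a + (k : ℂ)) n / (n.factorial : ℂ) * x ^ n‖
        ≤ (1 - t) ^ (-(α + (k : ℝ))) := by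
      rw [← (rbinom (α + k) ht0 (by linarith)).tsum_eq]
      exact Summable.tsum_le_tsum (hbound k) (hbinnorm k) (rbinom (α + k) ht0 (by linarith)).summable
    have e3 : ‖T k * (-1) ^ k * x ^ k‖ * (∑' n, ‖poch (a + (k : ℂ)) n / (n.factorial : ℂ) * x ^ n‖)
        ≤ ‖T k * (-1) ^ k * x ^ k‖ * ((1 - t) ^ (-(α + (k : ℝ)))) :=
      mul_le_mul_of_nonneg_left e2 (norm_nonneg _)
    refine le_trans e3 (le_of_eq ?_)
    have e4 : ((1 - t) ^ (-(α + (k : ℝ))) : ℝ) = (1 - t) ^ (-α) * ((1 - t)⁻¹) ^ k := by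
      rw [neg_add, Real.rpow_add h1t]
      congr 1
      rw [Real.rpow_neg h1t.le, Real.rpow_natCast, inv_pow]
    rw [e4]
    have e5 : ‖T k * (-1) ^ k * x ^ k‖ = ‖T k‖ * t ^ k := by
      rw [norm_mul, norm_mul, norm_pow, norm_pow, norm_neg, norm_one, one_pow, mul_one, ht]
    have e6 : ‖T k * ((w : ℝ) : ℂ) ^ k‖ = ‖T k‖ * w ^ k := by
      rw [norm_mul, norm_pow, Complex.norm_real, Real.norm_of_nonneg hw0]
    rw [e5, e6, hw]
    rw [div_pow, div_eq_mul_inv, inv_pow]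
    ring
  have hTsum : Summable (fun k => T k * ((w : ℝ) : ℂ) ^ k) := by
    apply summable_T_mul a b c hc'
    rw [Complex.norm_real, Real.norm_of_nonneg hw0]
    exact hw1
  have houter : Summable (fun k => ∑' n, ‖F (k, n)‖) := by
    apply Summable.of_nonneg_of_le (fun k => tsum_nonneg fun n => norm_nonneg _) hrowsum_le
    exact (summable_norm_iff.mpr hTsum).mul_left _
  have hFnorm : Summable (fun p : ℕ × ℕ => ‖F p‖) :=
    (summable_prod_of_nonneg (fun p => norm_nonneg _)).mpr ⟨hrownorm, houter⟩
  have hFsum : Summable F := hFnorm.of_norm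
  -- diagonal sums
  have diag : ∀ m : ℕ, ∑ kl ∈ Finset.HasAntidiagonal.antidiagonal m, F kl
      = poch a m * poch b m / (poch c m * (m.factorial : ℂ)) * x ^ m := by
    intro m
    rw [Finset.Nat.sum_antidiagonal_eq_sum_range_succ_mk]
    have key : ∀ k ∈ range (m + 1), F (k, m - k)
        = poch a m / (poch c m * (m.factorial : ℂ)) * x ^ m
          * ((-1 : ℂ) ^ k * (m.choose k : ℂ) * poch (c - b) k * poch (c + k) (m - k)) := by
      intro k hk
      have hkm : k ≤ m := Nat.lt_succ_iff.mp (mem_range.mp hk)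
      have e1 : poch a m = poch a k * poch (a + k) (m - k) := by
        rw [← poch_add a k (m - k), Nat.add_sub_cancel' hkm]
      have e2 : poch c m = poch c k * poch (c + k) (m - k) := by
        rw [← poch_add c k (m - k), Nat.add_sub_cancel' hkm]
      have e3 : ((m.factorial : ℕ) : ℂ)
          = (m.choose k : ℂ) * (k.factorial : ℂ) * (((m - k).factorial : ℕ) : ℂ) := by
        rw [← Nat.cast_mul, ← Nat.cast_mul, ← Nat.choose_mul_factorial_mul_factorial hkm]
      have e4 : x ^ m = x ^ k * x ^ (m - k) := by rw [← pow_add, Nat.add_sub_cancel' hkm]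
      have hne1 : poch c k ≠ 0 := poch_ne_zero hc' k
      have hne2 : poch (c + k) (m - k) ≠ 0 := by
        intro h
        apply poch_ne_zero hc' m
        rw [e2, h, mul_zero]
      have hne3 : ((k.factorial : ℂ)) ≠ 0 := Nat.cast_ne_zero.mpr k.factorial_ne_zero
      have hne4 : (((m - k).factorial : ℕ) : ℂ) ≠ 0 := Nat.cast_ne_zero.mpr (m - k).factorial_ne_zero
      have hne5 : ((m.choose k : ℕ) : ℂ) ≠ 0 := Nat.cast_ne_zero.mpr (Nat.choose_pos hkm).ne'
      show T k * (-1) ^ k * x ^ k * (poch (a + k) (m - k) / (((m - k).factorial : ℕ) : ℂ) * x ^ (m - k)) = _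
      rw [hT]
      simp only []
      rw [e1, e2, e3, e4]
      field_simp
    rw [Finset.sum_congr rfl key, ← Finset.mul_sum, vdm (c - b) m c,
      show c - (c - b) = b by ring]
    ring
  -- inner identity
  have inner : ∀ k : ℕ, (1 - x) ^ (-a) * (T k * u ^ k) = ∑' n, F (k, n) := by
    intro k
    have hbin := hasSum_binom (a + (k : ℂ)) hx1
    have htsum : ∑' n, F (k, n) = T k * (-1) ^ k * x ^ k * (1 - x) ^ (-(a + (k : ℂ))) :=
      (hbin.mul_left (T k * (-1) ^ k * x ^ k)).tsum_eq
    rw [htsum]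
    have hsplit : (1 - x) ^ (-(a + (k : ℂ))) = (1 - x) ^ (-a) * ((1 - x) ^ k)⁻¹ := by
      rw [show -(a + (k : ℂ)) = -a + -(k : ℂ) by ring, Complex.cpow_add _ _ h1x]
      congr 1
      rw [Complex.cpow_neg, Complex.cpow_natCast]
    rw [hsplit]
    have hun : u ^ k = (-1 : ℂ) ^ k * x ^ k * ((1 - x) ^ k)⁻¹ := by
      rw [hu, div_pow, show x - 1 = (-1) * (1 - x) by ring, mul_pow, div_eq_mul_inv, mul_inv]
      have hε : (((-1 : ℂ) ^ k)⁻¹) = (-1 : ℂ) ^ k := by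
        have h9 : (-1 : ℂ) ^ k * (-1 : ℂ) ^ k = 1 := by
          rw [← pow_add]
          exact Even.neg_one_pow ⟨k, rfl⟩
        exact inv_eq_of_mul_eq_one_left h9
      rw [hε]
      ring
    rw [hun]
    ring
  -- conclude
  have lhs_eq : twoF1 a b c x = ∑' m, ∑ kl ∈ Finset.HasAntidiagonal.antidiagonal m, F kl := by
    rw [twoF1]
    exact tsum_congr fun m => (diag m).symm
  rw [lhs_eq, ← tsum_prod_antidiag hFsum, Summable.tsum_prod' hFsum hrow]
  rw [twoF1, ← tsum_mul_left]
  exact tsum_congr fun k => (inner k).symm
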